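/- Let F_n(·|δ²) denote the distribution function of χ²_n(δ²). Then for every r ≥ 0, F_n(n + δ² − r | δ²) ≤ exp( −r²/(4n + 8δ²) ). -/

import Mathlib

open MeasureTheory ProbabilityTheory Finset
open scoped NNReal ENNReal Real

lemma my_log_ineq (x : ℝ) (hx : 0 ≤ x) : x - x ^ 2 / 2 ≤ Real.log (1 + x) := by
  set f : ℝ → ℝ := fun y => Real.log (1 + y) - y + y ^ 2 / 2 with hf
  have hd : ∀ y : ℝ, 0 < 1 + y → HasDerivAt f ((1 + y)⁻¹ - 1 + y) y := by
    intro y hy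
    have h1 : HasDerivAt (fun z : ℝ => 1 + z) 1 y := (hasDerivAt_id y).const_add 1
    have h2 : HasDerivAt (fun z : ℝ => Real.log (1 + z)) ((1 + y)⁻¹ * 1) y :=
      (Real.hasDerivAt_log (ne_of_gt hy)).comp y h1
    have h3 : HasDerivAt (fun z : ℝ => z ^ 2 / 2) (y * 2 / 2 * 1) y := by
      simpa using ((hasDerivAt_pow 2 y).div_const 2)
    have := (h2.sub (hasDerivAt_id y)).add h3
    convert this using 1 <;> first | rfl | ring
  have hmono : MonotoneOn f (Set.Ici 0) := by
    apply monotoneOn_of_deriv_nonneg (convex_Ici 0)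
    · apply ContinuousOn.add
      · apply ContinuousOn.sub
        · apply ContinuousOn.log
          · exact (continuousOn_const.add continuousOn_id)
          · intro y hy; have : (0:ℝ) ≤ y := hy; positivity
        · exact continuousOn_id
      · exact (continuousOn_pow 2).div_const 2
    · intro y hy
      have hy' : 0 < y := by simpa using hy
      exact ((hd y (by linarith)).differentiableAt).differentiableWithinAt
    · intro y hy
      have hy' : 0 < y := by simpa using hy
      rw [(hd y (by linarith)).deriv]
      have h1 : (1 + y) * (1 + y)⁻¹ = 1 := mul_inv_cancel₀ (by linarith)
      nlinarith [sq_nonneg y, inv_nonneg.mpr (by linarith : (0:ℝ) ≤ 1 + y)]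
  have h0 : f 0 ≤ f x := hmono (by simp) (by exact hx) hx
  simp only [hf] at h0
  simp only [add_zero, Real.log_one] at h0
  linarith

lemma my_gauss_int (t d : ℝ) (ht : t ≤ 0) :
    ∫ x, Real.exp (t * (x + d) ^ 2) ∂(gaussianReal 0 1) =
      (Real.sqrt (1 - 2 * t))⁻¹ * Real.exp (t * d ^ 2 / (1 - 2 * t)) := by
  have hA : (0:ℝ) < 1 / 2 - t := by linarith
  set A : ℝ := 1 / 2 - t with hAdef
  set m : ℝ := t * d / A with hm
  rw [gaussianReal_of_var_ne_zero _ one_ne_zero]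
  have hpdf : gaussianPDF 0 1 = fun x => ((Real.toNNReal (gaussianPDFReal 0 1 x) : ℝ≥0) : ℝ≥0∞) := rfl
  rw [hpdf, integral_withDensity_eq_integral_smul
    ((measurable_gaussianPDFReal 0 1).real_toNNReal) _]
  have h1 : ∀ x : ℝ, (Real.toNNReal (gaussianPDFReal 0 1 x) : ℝ≥0) • Real.exp (t * (x + d) ^ 2)
      = (Real.sqrt (2 * π))⁻¹ * (Real.exp (t * d ^ 2 / (1 - 2 * t)) * Real.exp (-A * (x - m) ^ 2)) := by
    intro x
    rw [NNReal.smul_def, Real.coe_toNNReal _ (gaussianPDFReal_nonneg 0 1 x)]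
    unfold gaussianPDFReal
    push_cast
    rw [mul_one, sub_zero]
    rw [smul_eq_mul, mul_assoc, ← Real.exp_add, ← Real.exp_add]
    have h2t : (1:ℝ) - 2 * t ≠ 0 := by linarith
    have hA' : A ≠ 0 := ne_of_gt hA
    congr 2
    rw [hm, hAdef]
    field_simp
    ring
  simp_rw [h1]
  rw [integral_const_mul, integral_const_mul]
  rw [MeasureTheory.integral_sub_right_eq_self (μ := volume) (fun y => Real.exp (-A * y ^ 2)) m,
    integral_gaussian]
  have hπ : (0:ℝ) < π := Real.pi_pos
  have h2A : (2 * π)⁻¹ * (π / A) = (1 - 2 * t)⁻¹ := by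
    have h2t : (1:ℝ) - 2 * t ≠ 0 := by linarith
    have hπ' : π ≠ 0 := ne_of_gt hπ
    rw [hAdef]
    rw [inv_mul_eq_div, div_div, show ((1:ℝ) / 2 - t) * (2 * π) = π * (1 - 2 * t) by ring,
      ← div_div, div_self hπ', one_div]
  rw [show (Real.sqrt (2 * π))⁻¹ * (Real.exp (t * d ^ 2 / (1 - 2 * t)) * Real.sqrt (π / A))
      = (Real.sqrt (2 * π))⁻¹ * Real.sqrt (π / A) * Real.exp (t * d ^ 2 / (1 - 2 * t)) from by ring,
    ← Real.sqrt_inv, ← Real.sqrt_mul (by positivity), h2A, Real.sqrt_inv]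


/-- The noncentral chi-squared distribution `χ²_n(δ²)` with `δ² = ∑ i, δ i ^ 2`,
realized as the law of `∑ i, (Z i + δ i)^2` for i.i.d. standard Gaussians `Z i`. -/
noncomputable def noncentralChiSq (n : ℕ) (δ : Fin n → ℝ) : Measure ℝ :=
  Measure.map (fun x => ∑ i, (x i + δ i) ^ 2)
    (Measure.pi fun _ : Fin n => gaussianReal 0 1)

/-- The distribution function of `χ²_n(δ²)`. -/
noncomputable def noncentralChiSqCDF (n : ℕ) (δ : Fin n → ℝ) (t : ℝ) : ℝ :=
  (noncentralChiSq n δ (Set.Iic t)).toReal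

theorem stmt_7 (n : ℕ) (δ : Fin n → ℝ) (δsq : ℝ) (hδ : δsq = ∑ i, δ i ^ 2)
    (r : ℝ) (hr : 0 ≤ r) :
    noncentralChiSqCDF n δ (n + δsq - r)
      ≤ Real.exp (-(r ^ 2 / (4 * n + 8 * δsq))) := by
  have hδ0 : 0 ≤ δsq := hδ ▸ Finset.sum_nonneg fun i _ => sq_nonneg _
  have hSmeas : Measurable (fun x : Fin n → ℝ => ∑ i, (x i + δ i) ^ 2) :=
    Finset.measurable_sum _ fun i _ => ((measurable_pi_apply i).add_const _).pow_const 2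
  rcases Nat.eq_zero_or_pos n with hn | hn
  · subst hn
    have hδsq : δsq = 0 := by simpa using hδ
    rw [hδsq]
    have hP : IsProbabilityMeasure (noncentralChiSq 0 δ) :=
      Measure.isProbabilityMeasure_map hSmeas.aemeasurable
    have h1 : noncentralChiSqCDF 0 δ ((0:ℕ) + 0 - r) ≤ 1 := by
      unfold noncentralChiSqCDF
      exact ENNReal.toReal_le_of_le_ofReal zero_le_one (by simpa using prob_le_one)
    calc noncentralChiSqCDF 0 δ ((0:ℕ) + 0 - r) ≤ 1 := h1
      _ ≤ Real.exp (-(r ^ 2 / (4 * (0:ℕ) + 8 * 0))) := by norm_num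
  · -- main case
    have hn1 : (1:ℝ) ≤ n := by exact_mod_cast hn
    set v : ℝ := (n:ℝ) + 2 * δsq with hveq
    have hv0 : 0 < v := by rw [hveq]; linarith
    set l : ℝ := r / (2 * v) with hl
    have hl0 : 0 ≤ l := div_nonneg hr (by linarith)
    have ht : -l ≤ 0 := neg_nonpos.mpr hl0
    set u : ℝ := 1 + 2 * l with hu
    have hu0 : (0:ℝ) < u := by rw [hu]; linarith
    have h1m2t : 1 - 2 * (-l) = u := by rw [hu]; ring
    set μp : Measure (Fin n → ℝ) := Measure.pi fun _ => gaussianReal 0 1 with hμp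
    set ε : ℝ := (n:ℝ) + δsq - r with hε
    have h_int : Integrable (fun x : Fin n → ℝ =>
        Real.exp (-l * ∑ i, (x i + δ i) ^ 2)) μp := by
      refine Integrable.mono' (integrable_const 1)
        (Measurable.aestronglyMeasurable ?_) (ae_of_all _ fun x => ?_)
      · exact Real.measurable_exp.comp (measurable_const.mul hSmeas)
      · rw [Real.norm_eq_abs, abs_of_pos (Real.exp_pos _)]
        apply Real.exp_le_one_iff.mpr
        exact mul_nonpos_of_nonpos_of_nonneg ht
          (Finset.sum_nonneg fun i _ => sq_nonneg _)
    have hstep : noncentralChiSqCDF n δ ε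
        = (μp {x | (∑ i, (x i + δ i) ^ 2) ≤ ε}).toReal := by
      unfold noncentralChiSqCDF noncentralChiSq
      rw [Measure.map_apply hSmeas measurableSet_Iic]
      rfl
    have hmark := measure_le_le_exp_mul_mgf (μ := μp)
      (X := fun x : Fin n → ℝ => ∑ i, (x i + δ i) ^ 2) ε ht h_int
    have hmgf : mgf (fun x : Fin n → ℝ => ∑ i, (x i + δ i) ^ 2) μp (-l)
        = ((Real.sqrt u)⁻¹) ^ n * Real.exp (-l * δsq / u) := by
      letI : MeasureSpace ℝ := ⟨gaussianReal 0 1⟩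
      have hvol : μp = (volume : Measure (Fin n → ℝ)) := rfl
      haveI : SigmaFinite (volume : Measure ℝ) := by
        show SigmaFinite (gaussianReal 0 1); infer_instance
      have : mgf (fun x : Fin n → ℝ => ∑ i, (x i + δ i) ^ 2) μp (-l)
          = ∫ x : Fin n → ℝ, ∏ i, Real.exp (-l * (x i + δ i) ^ 2) := by
        rw [mgf, hvol]
        congr 1
        funext x
        simp only [Finset.mul_sum, Real.exp_sum]
      rw [this, MeasureTheory.integral_fintype_prod_volume_eq_prod (ι := Fin n)
        (fun i y => Real.exp (-l * (y + δ i) ^ 2))]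
      have heach : ∀ i : Fin n, (∫ y : ℝ, Real.exp (-l * (y + δ i) ^ 2))
          = (Real.sqrt u)⁻¹ * Real.exp (-l * (δ i) ^ 2 / u) := by
        intro i
        have := my_gauss_int (-l) (δ i) ht
        rw [h1m2t] at this
        exact this
      simp_rw [heach]
      rw [Finset.prod_mul_distrib, Finset.prod_const, Finset.card_univ, Fintype.card_fin,
        ← Real.exp_sum]
      congr 1
      rw [hδ]
      rw [← Finset.sum_div, ← Finset.mul_sum]
    -- rewrite the bound into pure exponential form
    have hsqrt : (Real.sqrt u)⁻¹ ^ n = Real.exp ((n : ℝ) * -(Real.log u / 2)) := by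
      have h1 : Real.sqrt u = Real.exp (Real.log u / 2) := by
        rw [← Real.exp_log (Real.sqrt_pos.mpr hu0), Real.log_sqrt hu0.le]
      rw [h1, ← Real.exp_neg, ← Real.exp_nat_mul]
    have hlog : 2 * l - (2 * l) ^ 2 / 2 ≤ Real.log u := my_log_ineq (2 * l) (by linarith)
    have hinv : δsq * (1 - 2 * l) ≤ δsq / u := by
      rw [le_div_iff₀ hu0, hu]
      nlinarith [sq_nonneg l, hδ0]
    have key : -(-l) * ε + ((n : ℝ) * -(Real.log u / 2) + -l * δsq / u)
        ≤ -(r ^ 2 / (4 * (n:ℝ) + 8 * δsq)) := by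
      have h1 : (n:ℝ) * (2 * l - 2 * l ^ 2) ≤ (n:ℝ) * Real.log u := by
        apply mul_le_mul_of_nonneg_left _ (Nat.cast_nonneg n)
        nlinarith [hlog]
      have h2 : l * (δsq * (1 - 2 * l)) ≤ l * (δsq / u) := mul_le_mul_of_nonneg_left hinv hl0
      have h3 : -(r ^ 2 / (4 * (n:ℝ) + 8 * δsq)) = -l * r + l ^ 2 * v := by
        have h4v : 4 * (n:ℝ) + 8 * δsq = 4 * v := by rw [hveq]; ring
        rw [h4v, hl]
        have hv' : v ≠ 0 := ne_of_gt hv0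
        field_simp
        ring
      rw [h3, hε, hveq]
      have hd : -l * δsq / u = -(l * (δsq / u)) := by ring
      rw [hd]
      nlinarith [h1, h2]
    calc noncentralChiSqCDF n δ ε
        = (μp {x | (∑ i, (x i + δ i) ^ 2) ≤ ε}).toReal := hstep
      _ ≤ Real.exp (-(-l) * ε) * mgf (fun x : Fin n → ℝ => ∑ i, (x i + δ i) ^ 2) μp (-l) := hmark
      _ = Real.exp (-(-l) * ε + ((n : ℝ) * -(Real.log u / 2) + -l * δsq / u)) := by
          rw [hmgf, hsqrt, ← Real.exp_add, ← Real.exp_add]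
      _ ≤ Real.exp (-(r ^ 2 / (4 * (n:ℝ) + 8 * δsq))) := Real.exp_le_exp.mpr key
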